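/- arXiv:1907.10501 — 2 statements merged into one kernel-verified Lean document; each statement's English description precedes it below -/
import Mathlib

section
/- For real x ≠ y, PV ∫_{(-∞, (x+y)/2)} dz/((x-z)(z-y)) = 0, where the principal value removes a symmetric ε-neighbourhood of x (assuming x < y so only the singularity at x lies in the domain). -/
open MeasureTheory

lemma ftc_aux (x y a b : ℝ) (hxy : x ≠ y) (hab : a ≤ b) (hx : x ∉ Set.Icc a b)
    (hy : y ∉ Set.Icc a b) :
    ∫ z in a..b, 1 / ((x - z) * (z - y)) =
      ((x - y)⁻¹ * (Real.log (b - y) - Real.log (x - b)) -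
       (x - y)⁻¹ * (Real.log (a - y) - Real.log (x - a))) := by
  have hcont : ContinuousOn (fun z => 1 / ((x - z) * (z - y))) (Set.Icc a b) := by
    apply ContinuousOn.div continuousOn_const (by fun_prop)
    intro z hz
    have hzx : z ≠ x := fun h => hx (h ▸ hz)
    have hzy : z ≠ y := fun h => hy (h ▸ hz)
    exact mul_ne_zero (sub_ne_zero.mpr (Ne.symm hzx)) (sub_ne_zero.mpr hzy)
  have hderiv : ∀ z ∈ Set.uIcc a b,
      HasDerivAt (fun z => (x - y)⁻¹ * (Real.log (z - y) - Real.log (x - z)))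
        (1 / ((x - z) * (z - y))) z := by
    intro z hz
    rw [Set.uIcc_of_le hab] at hz
    have hzx : z ≠ x := fun h => hx (h ▸ hz)
    have hzy : z ≠ y := fun h => hy (h ▸ hz)
    have h1 : HasDerivAt (fun z => Real.log (z - y)) ((z - y)⁻¹) z := by
      simpa using (((hasDerivAt_id z).sub_const y).log (sub_ne_zero.mpr hzy))
    have h2 : HasDerivAt (fun z => Real.log (x - z)) ((-1) / (x - z)) z := by
      simpa using (((hasDerivAt_const z x).sub (hasDerivAt_id z)).log
        (sub_ne_zero.mpr (Ne.symm hzx)))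
    have := (h1.sub h2).const_mul ((x - y)⁻¹)
    refine this.congr_deriv ?_
    have hx' : x - z ≠ 0 := sub_ne_zero.mpr (Ne.symm hzx)
    have hy' : z - y ≠ 0 := sub_ne_zero.mpr hzy
    have hxy' : x - y ≠ 0 := sub_ne_zero.mpr hxy
    field_simp
    ring
  rw [intervalIntegral.integral_eq_sub_of_hasDerivAt hderiv
    ((hcont.mono (by rw [Set.uIcc_of_le hab])).intervalIntegrable)]

/-- For `x < y`,
`PV ∫_{(-∞,(x+y)/2)} dz/((x-z)(z-y)) = 0`, where the principal value is the limit as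
`ε → 0⁺` of the integral over `(-1/ε, (x+y)/2)` minus the symmetric `ε`-neighbourhood
of `x`. -/
theorem stmt9 (x y : ℝ) (hxy : x < y) :
    Filter.Tendsto
      (fun ε : ℝ =>
        ∫ z in Set.Ioo (-ε⁻¹) ((x + y) / 2) \ Set.Ioo (x - ε) (x + ε),
          1 / ((x - z) * (z - y)))
      (nhdsWithin 0 (Set.Ioi 0)) (nhds 0) := by
  set c := (x - y)⁻¹ with hc
  set G : ℝ → ℝ := fun ε =>
    c * (Real.log (x - ε - y) - Real.log (x + ε - y)) -
      c * (Real.log (-1 - ε * y) - Real.log (ε * x + 1)) with hG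
  have hxy' : x - y ≠ 0 := sub_ne_zero.mpr hxy.ne
  -- G tends to 0
  have hGcont : ContinuousAt G 0 := by
    have l1 : ContinuousAt (fun ε : ℝ => Real.log (x - ε - y)) 0 :=
      ContinuousAt.log (by fun_prop) (by simpa using hxy')
    have l2 : ContinuousAt (fun ε : ℝ => Real.log (x + ε - y)) 0 :=
      ContinuousAt.log (by fun_prop) (by simpa using hxy')
    have l3 : ContinuousAt (fun ε : ℝ => Real.log (-1 - ε * y)) 0 :=
      ContinuousAt.log (by fun_prop) (by norm_num)
    have l4 : ContinuousAt (fun ε : ℝ => Real.log (ε * x + 1)) 0 :=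
      ContinuousAt.log (by fun_prop) (by norm_num)
    exact (continuousAt_const.mul (l1.sub l2)).sub (continuousAt_const.mul (l3.sub l4))
  have hG0 : G 0 = 0 := by
    norm_num [hG, Real.log_neg_eq_log]
  have hGt : Filter.Tendsto G (nhdsWithin 0 (Set.Ioi 0)) (nhds 0) := by
    have h := (hGcont.tendsto.mono_left (nhdsWithin_le_nhds (s := Set.Ioi (0:ℝ))))
    rwa [hG0] at h
  refine hGt.congr' ?_
  -- eventual equality
  set ε₀ := min ((y - x) / 2) ((1 + |x| + |y|)⁻¹) with hε₀def
  have hε₀ : 0 < ε₀ := by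
    apply lt_min (by linarith)
    positivity
  filter_upwards [Ioo_mem_nhdsGT_of_mem (Set.mem_Ico.mpr ⟨le_refl (0:ℝ), hε₀⟩)] with ε hε
  obtain ⟨hε1, hε2⟩ := hε
  have hεne : ε ≠ 0 := ne_of_gt hε1
  have hεsmall : ε < (y - x) / 2 := lt_of_lt_of_le hε2 (min_le_left _ _)
  have hεinv : ε < (1 + |x| + |y|)⁻¹ := lt_of_lt_of_le hε2 (min_le_right _ _)
  have habs : 0 < 1 + |x| + |y| := by positivity
  have hεprod : ε * (1 + |x| + |y|) < 1 := by
    rw [← inv_inv (1 + |x| + |y|)] at habs ⊢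
    calc ε * (1 + |x| + |y|)⁻¹⁻¹ < (1 + |x| + |y|)⁻¹ * (1 + |x| + |y|)⁻¹⁻¹ := by
          apply mul_lt_mul_of_pos_right hεinv
          rw [inv_inv]; positivity
      _ = 1 := by rw [inv_inv]; field_simp
  have hεx : ε * |x| < 1 := by nlinarith [abs_nonneg x, abs_nonneg y, hε1.le]
  have hεy : ε * |y| < 1 := by nlinarith [abs_nonneg x, abs_nonneg y, hε1.le]
  have hεlt1 : ε < 1 := by nlinarith [abs_nonneg x, abs_nonneg y]
  have habsy : |ε * y| < 1 := by rw [abs_mul, abs_of_pos hε1]; exact hεy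
  have habsx : |ε * x| < 1 := by rw [abs_mul, abs_of_pos hε1]; exact hεx
  have hne1 : -1 - ε * y ≠ 0 := by
    intro h
    have h' : ε * y = -1 := by linarith
    rw [h'] at habsy
    norm_num at habsy
  have hne2 : ε * x + 1 ≠ 0 := by
    intro h
    have h' : ε * x = -1 := by linarith
    rw [h'] at habsx
    norm_num at habsx
  -- a < x - ε
  have hainv : 1 + |x| + |y| < ε⁻¹ := by
    rw [← inv_inv (1 + |x| + |y|)]
    exact (inv_lt_inv₀ (by positivity) hε1).mpr hεinv
  have ha : -ε⁻¹ < x - ε := by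
    have h1 := neg_abs_le x
    have h2 := abs_nonneg y
    linarith
  have hb : x + ε < (x + y) / 2 := by linarith
  have hab1 : -ε⁻¹ < x - ε := ha
  -- set decomposition
  have hset : Set.Ioo (-ε⁻¹) ((x + y) / 2) \ Set.Ioo (x - ε) (x + ε) =
      Set.Ioc (-ε⁻¹) (x - ε) ∪ Set.Ico (x + ε) ((x + y) / 2) := by
    ext z
    simp only [Set.mem_diff, Set.mem_Ioo, Set.mem_union, Set.mem_Ioc, Set.mem_Ico,
      not_and, not_lt]
    constructor
    · rintro ⟨⟨h1, h2⟩, h3⟩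
      rcases lt_or_ge (x - ε) z with h | h
      · exact Or.inr ⟨h3 h, h2⟩
      · exact Or.inl ⟨h1, h⟩
    · rintro (⟨h1, h2⟩ | ⟨h1, h2⟩)
      · exact ⟨⟨h1, by linarith⟩, fun hc => absurd hc (not_lt.mpr h2)⟩
      · exact ⟨⟨by linarith, h2⟩, fun _ => h1⟩
  -- integrability
  have hcont1 : ContinuousOn (fun z => 1 / ((x - z) * (z - y))) (Set.Icc (-ε⁻¹) (x - ε)) := by
    apply ContinuousOn.div continuousOn_const (by fun_prop)
    intro z hz
    obtain ⟨h1, h2⟩ := hz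
    exact ne_of_lt (mul_neg_of_pos_of_neg (by linarith) (by linarith))
  have hcont2 : ContinuousOn (fun z => 1 / ((x - z) * (z - y)))
      (Set.Icc (x + ε) ((x + y) / 2)) := by
    apply ContinuousOn.div continuousOn_const (by fun_prop)
    intro z hz
    obtain ⟨h1, h2⟩ := hz
    exact ne_of_gt (mul_pos_of_neg_of_neg (by linarith) (by linarith))
  have hint1 : IntegrableOn (fun z => 1 / ((x - z) * (z - y)))
      (Set.Ioc (-ε⁻¹) (x - ε)) volume :=
    (hcont1.integrableOn_Icc).mono_set Set.Ioc_subset_Icc_self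
  have hint2 : IntegrableOn (fun z => 1 / ((x - z) * (z - y)))
      (Set.Ico (x + ε) ((x + y) / 2)) volume :=
    (hcont2.integrableOn_Icc).mono_set Set.Ico_subset_Icc_self
  have hdisj : Disjoint (Set.Ioc (-ε⁻¹) (x - ε)) (Set.Ico (x + ε) ((x + y) / 2)) := by
    apply Set.disjoint_left.mpr
    rintro z ⟨_, h1⟩ ⟨h2, _⟩
    linarith
  rw [hset, setIntegral_union hdisj measurableSet_Ico hint1 hint2,
    ← intervalIntegral.integral_of_le hab1.le, integral_Ico_eq_integral_Ioo,
    ← MeasureTheory.integral_Ioc_eq_integral_Ioo,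
    ← intervalIntegral.integral_of_le hb.le,
    ftc_aux x y _ _ hxy.ne hab1.le
      (by simp only [Set.mem_Icc, not_and, not_le]; intro _; linarith)
      (by simp only [Set.mem_Icc, not_and, not_le]; intro _; linarith),
    ftc_aux x y _ _ hxy.ne hb.le
      (by simp only [Set.mem_Icc, not_and, not_le]; intro h; linarith)
      (by simp only [Set.mem_Icc, not_and, not_le]; intro _; linarith)]
  -- now algebra with logs
  have e1 : x - (x - ε) = ε := by ring
  have e2 : x - (x + ε) = -ε := by ring
  have e3 : -ε⁻¹ - y = (-1 - ε * y) / ε := by rw [eq_div_iff hεne]; field_simp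
  have e4 : x - -ε⁻¹ = (ε * x + 1) / ε := by rw [eq_div_iff hεne]; field_simp; ring
  have e5 : (x + y) / 2 - y = x - (x + y) / 2 := by ring
  rw [e1, e2, e3, e4, e5, Real.log_neg_eq_log, Real.log_div hne1 hεne,
    Real.log_div hne2 hεne]
  simp only [hG]
  ring
end

section
/- For x < z < y with 2|x - z| < |z - y|, and Schwartz Q, one has the kernel difference identity 𝓡_Q(y,z) - 𝓡_Q(y,x) = (x - z) · (1/π²) PV ∫_ℝ Q(ξ)/((ξ-y)(x-ξ)(z-ξ)) dξ, where 𝓡_Q(a,b) := (1/π²) PV ∫ Q(ξ)/((a-ξ)(ξ-b)) dξ. -/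
open MeasureTheory Real Filter

/-- Bound for a quotient with two factors bounded below. -/
lemma aux_abs_div_le (q a b d : ℝ) (hd : 0 < d) (ha : d ≤ |a|) (hb : d ≤ |b|) :
    |q / (a * b)| ≤ d⁻¹ * d⁻¹ * |q| := by
  have hdd : 0 < d * d := by positivity
  have h1 : d * d ≤ |a| * |b| := mul_le_mul ha hb hd.le (abs_nonneg _)
  have h2 : |q / (a * b)| = |q| / (|a| * |b|) := by rw [abs_div, abs_mul]
  rw [h2]
  calc |q| / (|a| * |b|) ≤ |q| / (d * d) :=
        div_le_div_of_nonneg_left (abs_nonneg q) hdd h1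
    _ = d⁻¹ * d⁻¹ * |q| := by rw [div_eq_mul_inv, mul_inv]; ring

/-- Integrability from a pointwise domination by a multiple of a Schwartz function. -/
lemma aux_integrableOn (Q : SchwartzMap ℝ ℝ) (g : ℝ → ℝ) (hg : Measurable g)
    (s : Set ℝ) (hs : MeasurableSet s) (C : ℝ)
    (hb : ∀ ξ ∈ s, |g ξ| ≤ C * |Q ξ|) : IntegrableOn g s := by
  apply Integrable.mono' ((Q.integrable.abs.const_mul C).restrict (s := s))
    (hg.aestronglyMeasurable.restrict)
  refine (ae_restrict_iff' hs).mpr (ae_of_all _ ?_)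
  intro ξ hξ
  simpa [Real.norm_eq_abs] using hb ξ hξ

/-- For `x < z < y` with `2|x-z| < |z-y|` and Schwartz `Q`, the kernel
difference identity
`𝓡_Q(y,z) - 𝓡_Q(y,x) = (x-z) (1/π²) PV ∫ Q(ξ)/((ξ-y)(x-ξ)(z-ξ)) dξ`
holds, where `𝓡_Q(a,b) = (1/π²) PV ∫ Q(ξ)/((a-ξ)(ξ-b)) dξ` and the three-pole principal
value `I` is taken in the symmetric sense at the poles `x, y, z`. -/
theorem stmt16
    (Q : SchwartzMap ℝ ℝ)
    (RQker : ℝ → ℝ → ℝ)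
    (hRQker : ∀ a b : ℝ, a ≠ b → Tendsto
      (fun δ : ℝ => (1 / π ^ 2) *
        ∫ ξ in {ξ : ℝ | δ ≤ |ξ - a| ∧ δ ≤ |ξ - b|}, Q ξ / ((a - ξ) * (ξ - b)))
      (nhdsWithin 0 (Set.Ioi 0)) (nhds (RQker a b)))
    (x z y : ℝ) (h1 : x < z) (h2 : z < y) (h3 : 2 * |x - z| < |z - y|)
    (I : ℝ)
    (hI : Tendsto
      (fun δ : ℝ =>
        ∫ ξ in {ξ : ℝ | δ ≤ |ξ - x| ∧ δ ≤ |ξ - y| ∧ δ ≤ |ξ - z|},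
          Q ξ / ((ξ - y) * (x - ξ) * (z - ξ)))
      (nhdsWithin 0 (Set.Ioi 0)) (nhds I)) :
    RQker y z - RQker y x = (x - z) * ((1 / π ^ 2) * I) := by
  have hzx : 0 < z - x := sub_pos.mpr h1
  have hyz : 0 < y - z := sub_pos.mpr h2
  have h3' : 2 * (z - x) < y - z := by
    have e1 : |x - z| = z - x := by rw [abs_sub_comm]; exact abs_of_pos hzx
    have e2 : |z - y| = y - z := by rw [abs_sub_comm]; exact abs_of_pos hyz
    rwa [e1, e2] at h3
  set δ₀ : ℝ := (z - x) / 2 with hδ₀def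
  have hδ₀ : 0 < δ₀ := by positivity
  set M : ℝ := SchwartzMap.seminorm ℝ 0 0 Q with hM
  have hQM : ∀ ξ : ℝ, |Q ξ| ≤ M := fun ξ => by
    simpa [Real.norm_eq_abs] using SchwartzMap.norm_le_seminorm ℝ Q ξ
  -- the functions
  set g1 : ℝ → ℝ := fun ξ => Q ξ / ((y - ξ) * (ξ - z)) with hg1
  set g2 : ℝ → ℝ := fun ξ => Q ξ / ((y - ξ) * (ξ - x)) with hg2
  set g3 : ℝ → ℝ := fun ξ => Q ξ / ((ξ - y) * (x - ξ) * (z - ξ)) with hg3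
  have hg1m : Measurable g1 := by fun_prop
  have hg2m : Measurable g2 := by fun_prop
  -- sets
  set A : ℝ → Set ℝ := fun δ => {ξ : ℝ | δ ≤ |ξ - y| ∧ δ ≤ |ξ - z|} with hA
  set B : ℝ → Set ℝ := fun δ => {ξ : ℝ | δ ≤ |ξ - y| ∧ δ ≤ |ξ - x|} with hB
  set C : ℝ → Set ℝ := fun δ => {ξ : ℝ | δ ≤ |ξ - x| ∧ δ ≤ |ξ - y| ∧ δ ≤ |ξ - z|} with hC
  have habs : ∀ c : ℝ, Measurable fun ξ : ℝ => |ξ - c| :=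
    fun c => (measurable_id.sub measurable_const).abs
  have hCmeas : ∀ δ : ℝ, MeasurableSet (C δ) := by
    intro δ
    have hCeq : C δ = {ξ : ℝ | δ ≤ |ξ - x|} ∩ ({ξ : ℝ | δ ≤ |ξ - y|} ∩ {ξ : ℝ | δ ≤ |ξ - z|}) := by
      ext ξ; simp [hC, Set.mem_setOf_eq, and_assoc]
    rw [hCeq]
    exact (measurableSet_le measurable_const (habs x)).inter
      ((measurableSet_le measurable_const (habs y)).inter
        (measurableSet_le measurable_const (habs z)))
  -- set decompositions for 0 < δ ≤ δ₀
  have hAdecomp : ∀ δ : ℝ, 0 < δ → δ ≤ δ₀ → A δ = C δ ∪ Set.Ioo (x - δ) (x + δ) := by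
    intro δ hδ hδle
    ext ξ
    simp only [hA, hC, Set.mem_setOf_eq, Set.mem_union, Set.mem_Ioo]
    constructor
    · rintro ⟨hy', hz'⟩
      by_cases hx' : δ ≤ |ξ - x|
      · exact Or.inl ⟨hx', hy', hz'⟩
      · push_neg at hx'
        rw [abs_lt] at hx'
        exact Or.inr ⟨by linarith [hx'.1], by linarith [hx'.2]⟩
    · rintro (⟨_, hy', hz'⟩ | ⟨hlo, hhi⟩)
      · exact ⟨hy', hz'⟩
      · have hδ0' : (2:ℝ) * δ₀ = z - x := by rw [hδ₀def]; ring
        constructor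
        · exact le_abs.mpr (Or.inr (by linarith))
        · exact le_abs.mpr (Or.inr (by linarith))
  have hBdecomp : ∀ δ : ℝ, 0 < δ → δ ≤ δ₀ → B δ = C δ ∪ Set.Ioo (z - δ) (z + δ) := by
    intro δ hδ hδle
    ext ξ
    simp only [hB, hC, Set.mem_setOf_eq, Set.mem_union, Set.mem_Ioo]
    constructor
    · rintro ⟨hy', hx'⟩
      by_cases hz' : δ ≤ |ξ - z|
      · exact Or.inl ⟨hx', hy', hz'⟩
      · push_neg at hz'
        rw [abs_lt] at hz'
        exact Or.inr ⟨by linarith [hz'.1], by linarith [hz'.2]⟩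
    · rintro (⟨hx', hy', _⟩ | ⟨hlo, hhi⟩)
      · exact ⟨hy', hx'⟩
      · have hδ0' : (2:ℝ) * δ₀ = z - x := by rw [hδ₀def]; ring
        constructor
        · exact le_abs.mpr (Or.inr (by linarith))
        · exact le_abs.mpr (Or.inl (by linarith))
  -- denominator lower bounds on the small intervals
  have hball_x : ∀ δ : ℝ, 0 < δ → δ ≤ δ₀ → ∀ ξ ∈ Set.Ioo (x - δ) (x + δ),
      δ₀ ≤ |y - ξ| ∧ δ₀ ≤ |ξ - z| := by
    intro δ hδ hδle ξ hξ
    obtain ⟨hlo, hhi⟩ := hξ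
    have hδ0' : (2:ℝ) * δ₀ = z - x := by rw [hδ₀def]; ring
    constructor
    · exact le_abs.mpr (Or.inl (by linarith))
    · exact le_abs.mpr (Or.inr (by linarith))
  have hball_z : ∀ δ : ℝ, 0 < δ → δ ≤ δ₀ → ∀ ξ ∈ Set.Ioo (z - δ) (z + δ),
      δ₀ ≤ |y - ξ| ∧ δ₀ ≤ |ξ - x| := by
    intro δ hδ hδle ξ hξ
    obtain ⟨hlo, hhi⟩ := hξ
    have hδ0' : (2:ℝ) * δ₀ = z - x := by rw [hδ₀def]; ring
    constructor
    · exact le_abs.mpr (Or.inl (by linarith))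
    · exact le_abs.mpr (Or.inl (by linarith))
  -- integrability facts
  have hint_g1_C : ∀ δ : ℝ, 0 < δ → IntegrableOn g1 (C δ) := by
    intro δ hδ
    apply aux_integrableOn Q g1 hg1m _ (hCmeas δ) (δ⁻¹ * δ⁻¹)
    rintro ξ ⟨_, hy', hz'⟩
    have h := aux_abs_div_le (Q ξ) (y - ξ) (ξ - z) δ hδ (by rwa [abs_sub_comm] at hy') hz'
    simpa [hg1] using h
  have hint_g2_C : ∀ δ : ℝ, 0 < δ → IntegrableOn g2 (C δ) := by
    intro δ hδ
    apply aux_integrableOn Q g2 hg2m _ (hCmeas δ) (δ⁻¹ * δ⁻¹)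
    rintro ξ ⟨hx', hy', _⟩
    have h := aux_abs_div_le (Q ξ) (y - ξ) (ξ - x) δ hδ (by rwa [abs_sub_comm] at hy') hx'
    simpa [hg2] using h
  have hint_g1_ball : ∀ δ : ℝ, 0 < δ → δ ≤ δ₀ → IntegrableOn g1 (Set.Ioo (x - δ) (x + δ)) := by
    intro δ hδ hδle
    apply aux_integrableOn Q g1 hg1m _ measurableSet_Ioo (δ₀⁻¹ * δ₀⁻¹)
    intro ξ hξ
    obtain ⟨hy', hz'⟩ := hball_x δ hδ hδle ξ hξ
    simpa [hg1] using aux_abs_div_le (Q ξ) (y - ξ) (ξ - z) δ₀ hδ₀ hy' hz'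
  have hint_g2_ball : ∀ δ : ℝ, 0 < δ → δ ≤ δ₀ → IntegrableOn g2 (Set.Ioo (z - δ) (z + δ)) := by
    intro δ hδ hδle
    apply aux_integrableOn Q g2 hg2m _ measurableSet_Ioo (δ₀⁻¹ * δ₀⁻¹)
    intro ξ hξ
    obtain ⟨hy', hx'⟩ := hball_z δ hδ hδle ξ hξ
    simpa [hg2] using aux_abs_div_le (Q ξ) (y - ξ) (ξ - x) δ₀ hδ₀ hy' hx'
  -- error terms
  set E1 : ℝ → ℝ := fun δ => ∫ ξ in Set.Ioo (x - δ) (x + δ), g1 ξ with hE1def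
  set E2 : ℝ → ℝ := fun δ => ∫ ξ in Set.Ioo (z - δ) (z + δ), g2 ξ with hE2def
  have hbnd1 : ∀ δ : ℝ, 0 < δ → δ ≤ δ₀ → ‖E1 δ‖ ≤ δ₀⁻¹ * δ₀⁻¹ * M * (2 * δ) := by
    intro δ hδ hδle
    have hvol : volume (Set.Ioo (x - δ) (x + δ)) < ⊤ := by
      rw [Real.volume_Ioo]; exact ENNReal.ofReal_lt_top
    have hbound : ∀ ξ ∈ Set.Ioo (x - δ) (x + δ), ‖g1 ξ‖ ≤ δ₀⁻¹ * δ₀⁻¹ * M := by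
      intro ξ hξ
      obtain ⟨hy', hz'⟩ := hball_x δ hδ hδle ξ hξ
      have h := aux_abs_div_le (Q ξ) (y - ξ) (ξ - z) δ₀ hδ₀ hy' hz'
      have h2 : δ₀⁻¹ * δ₀⁻¹ * |Q ξ| ≤ δ₀⁻¹ * δ₀⁻¹ * M := by
        apply mul_le_mul_of_nonneg_left (hQM ξ) (by positivity)
      show ‖Q ξ / ((y - ξ) * (ξ - z))‖ ≤ δ₀⁻¹ * δ₀⁻¹ * M
      rw [Real.norm_eq_abs]
      exact h.trans h2
    have := norm_setIntegral_le_of_norm_le_const hvol hbound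
    calc ‖E1 δ‖ ≤ (δ₀⁻¹ * δ₀⁻¹ * M) * (volume (Set.Ioo (x - δ) (x + δ))).toReal := this
      _ = δ₀⁻¹ * δ₀⁻¹ * M * (2 * δ) := by
          rw [Real.volume_Ioo, ENNReal.toReal_ofReal (by linarith)]; ring
  have hbnd2 : ∀ δ : ℝ, 0 < δ → δ ≤ δ₀ → ‖E2 δ‖ ≤ δ₀⁻¹ * δ₀⁻¹ * M * (2 * δ) := by
    intro δ hδ hδle
    have hvol : volume (Set.Ioo (z - δ) (z + δ)) < ⊤ := by
      rw [Real.volume_Ioo]; exact ENNReal.ofReal_lt_top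
    have hbound : ∀ ξ ∈ Set.Ioo (z - δ) (z + δ), ‖g2 ξ‖ ≤ δ₀⁻¹ * δ₀⁻¹ * M := by
      intro ξ hξ
      obtain ⟨hy', hx'⟩ := hball_z δ hδ hδle ξ hξ
      have h := aux_abs_div_le (Q ξ) (y - ξ) (ξ - x) δ₀ hδ₀ hy' hx'
      have h2 : δ₀⁻¹ * δ₀⁻¹ * |Q ξ| ≤ δ₀⁻¹ * δ₀⁻¹ * M := by
        apply mul_le_mul_of_nonneg_left (hQM ξ) (by positivity)
      show ‖Q ξ / ((y - ξ) * (ξ - x))‖ ≤ δ₀⁻¹ * δ₀⁻¹ * M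
      rw [Real.norm_eq_abs]
      exact h.trans h2
    have := norm_setIntegral_le_of_norm_le_const hvol hbound
    calc ‖E2 δ‖ ≤ (δ₀⁻¹ * δ₀⁻¹ * M) * (volume (Set.Ioo (z - δ) (z + δ))).toReal := this
      _ = δ₀⁻¹ * δ₀⁻¹ * M * (2 * δ) := by
          rw [Real.volume_Ioo, ENNReal.toReal_ofReal (by linarith)]; ring
  have hIoc : Set.Ioc (0:ℝ) δ₀ ∈ nhdsWithin 0 (Set.Ioi 0) :=
    Ioc_mem_nhdsGT_of_mem ⟨le_refl 0, hδ₀⟩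
  have hlin : Tendsto (fun δ : ℝ => δ₀⁻¹ * δ₀⁻¹ * M * (2 * δ))
      (nhdsWithin 0 (Set.Ioi 0)) (nhds 0) := by
    have hc : Continuous fun δ : ℝ => δ₀⁻¹ * δ₀⁻¹ * M * (2 * δ) := by fun_prop
    have : Tendsto (fun δ : ℝ => δ₀⁻¹ * δ₀⁻¹ * M * (2 * δ)) (nhds 0)
        (nhds (δ₀⁻¹ * δ₀⁻¹ * M * (2 * 0))) := hc.tendsto 0
    simpa using this.mono_left nhdsWithin_le_nhds
  have hE1lim : Tendsto E1 (nhdsWithin 0 (Set.Ioi 0)) (nhds 0) := by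
    apply squeeze_zero_norm' _ hlin
    filter_upwards [hIoc] with δ hδ
    exact hbnd1 δ hδ.1 hδ.2
  have hE2lim : Tendsto E2 (nhdsWithin 0 (Set.Ioi 0)) (nhds 0) := by
    apply squeeze_zero_norm' _ hlin
    filter_upwards [hIoc] with δ hδ
    exact hbnd2 δ hδ.1 hδ.2
  -- the key pointwise identity for the truncated integrals
  have hkey : ∀ δ : ℝ, 0 < δ → δ ≤ δ₀ →
      (1 / π ^ 2) * (∫ ξ in A δ, g1 ξ) - (1 / π ^ 2) * (∫ ξ in B δ, g2 ξ) =
      (x - z) * ((1 / π ^ 2) * (∫ ξ in C δ, g3 ξ)) +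
        ((1 / π ^ 2) * E1 δ - (1 / π ^ 2) * E2 δ) := by
    intro δ hδ hδle
    have hdisj1 : Disjoint (C δ) (Set.Ioo (x - δ) (x + δ)) := by
      rw [Set.disjoint_left]
      rintro ξ ⟨hx', _, _⟩ ⟨hlo, hhi⟩
      have : |ξ - x| < δ := abs_lt.mpr ⟨by linarith, by linarith⟩
      linarith
    have hdisj2 : Disjoint (C δ) (Set.Ioo (z - δ) (z + δ)) := by
      rw [Set.disjoint_left]
      rintro ξ ⟨_, _, hz'⟩ ⟨hlo, hhi⟩
      have : |ξ - z| < δ := abs_lt.mpr ⟨by linarith, by linarith⟩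
      linarith
    have hsplit1 : (∫ ξ in A δ, g1 ξ) = (∫ ξ in C δ, g1 ξ) + E1 δ := by
      rw [hAdecomp δ hδ hδle]
      exact setIntegral_union hdisj1 measurableSet_Ioo (hint_g1_C δ hδ)
        (hint_g1_ball δ hδ hδle)
    have hsplit2 : (∫ ξ in B δ, g2 ξ) = (∫ ξ in C δ, g2 ξ) + E2 δ := by
      rw [hBdecomp δ hδ hδle]
      exact setIntegral_union hdisj2 measurableSet_Ioo (hint_g2_C δ hδ)
        (hint_g2_ball δ hδ hδle)
    have hptwise : ∀ ξ ∈ C δ, g1 ξ - g2 ξ = (x - z) * g3 ξ := by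
      rintro ξ ⟨hx', hy', hz'⟩
      have hx0 : ξ - x ≠ 0 := by
        intro h; rw [h] at hx'; simp at hx'; linarith
      have hy0 : y - ξ ≠ 0 := by
        intro h
        have : ξ - y = 0 := by linarith [sub_eq_zero.mp h]
        rw [this] at hy'; simp at hy'; linarith
      have hz0 : ξ - z ≠ 0 := by
        intro h; rw [h] at hz'; simp at hz'; linarith
      have hy0' : ξ - y ≠ 0 := fun h => hy0 (by linarith [sub_eq_zero.mp h])
      have hx0' : x - ξ ≠ 0 := fun h => hx0 (by linarith [sub_eq_zero.mp h])
      have hz0' : z - ξ ≠ 0 := fun h => hz0 (by linarith [sub_eq_zero.mp h])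
      simp only [hg1, hg2, hg3]
      field_simp
      ring
    have hCint : (∫ ξ in C δ, g1 ξ) - (∫ ξ in C δ, g2 ξ) =
        (x - z) * (∫ ξ in C δ, g3 ξ) := by
      rw [← integral_sub (hint_g1_C δ hδ) (hint_g2_C δ hδ)]
      rw [setIntegral_congr_fun (hCmeas δ) hptwise]
      exact integral_const_mul (x - z) _
    rw [hsplit1, hsplit2]
    linear_combination (1 / π ^ 2) * hCint
  -- assemble the limits
  have hyne : y ≠ z := ne_of_gt h2
  have hyx : y ≠ x := ne_of_gt (h1.trans h2)
  have hF : Tendsto (fun δ : ℝ =>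
      (1 / π ^ 2) * (∫ ξ in A δ, g1 ξ) - (1 / π ^ 2) * (∫ ξ in B δ, g2 ξ))
      (nhdsWithin 0 (Set.Ioi 0)) (nhds (RQker y z - RQker y x)) :=
    (hRQker y z hyne).sub (hRQker y x hyx)
  have hG : Tendsto (fun δ : ℝ =>
      (x - z) * ((1 / π ^ 2) * (∫ ξ in C δ, g3 ξ)) +
        ((1 / π ^ 2) * E1 δ - (1 / π ^ 2) * E2 δ))
      (nhdsWithin 0 (Set.Ioi 0))
      (nhds ((x - z) * ((1 / π ^ 2) * I) + ((1 / π ^ 2) * 0 - (1 / π ^ 2) * 0))) :=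
    ((hI.const_mul _).const_mul _).add ((hE1lim.const_mul _).sub (hE2lim.const_mul _))
  have hG' : Tendsto (fun δ : ℝ =>
      (1 / π ^ 2) * (∫ ξ in A δ, g1 ξ) - (1 / π ^ 2) * (∫ ξ in B δ, g2 ξ))
      (nhdsWithin 0 (Set.Ioi 0))
      (nhds ((x - z) * ((1 / π ^ 2) * I))) := by
    have heq : (fun δ : ℝ =>
        (x - z) * ((1 / π ^ 2) * (∫ ξ in C δ, g3 ξ)) +
          ((1 / π ^ 2) * E1 δ - (1 / π ^ 2) * E2 δ)) =ᶠ[nhdsWithin 0 (Set.Ioi 0)]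
        (fun δ : ℝ =>
          (1 / π ^ 2) * (∫ ξ in A δ, g1 ξ) - (1 / π ^ 2) * (∫ ξ in B δ, g2 ξ)) := by
      filter_upwards [hIoc] with δ hδ
      exact (hkey δ hδ.1 hδ.2).symm
    have := hG.congr' heq
    simpa using this
  exact tendsto_nhds_unique hF hG'
end
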